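/- Let f, g be complex numbers in the open unit disk and let λ be a complex number with |λ| = 1. Then the cubic polynomial z³ − (f + g + λ·conj(f)·conj(g))·z² + (f·g + λ·(conj(f) + conj(g)))·z − λ has all three of its roots on the unit circle. -/

import Mathlib

open ComplexConjugate

lemma blaschke_key (f z : ℂ) :
    (‖z - f‖)^2 - (‖conj f * z - 1‖)^2
      = ((‖z‖)^2 - 1) * (1 - (‖f‖)^2) := by
  simp only [Complex.sq_norm, Complex.normSq_apply, Complex.sub_re, Complex.sub_im,
    Complex.mul_re, Complex.mul_im, Complex.conj_re, Complex.conj_im,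
    Complex.one_re, Complex.one_im]
  ring

set_option maxHeartbeats 1000000 in
/-- Symmetric parametrization of Poncelet triangles: for `f, g` in the open unit
disk and `|λ| = 1`, every root of the cubic
`z³ − (f + g + λ·conj f·conj g)·z² + (f·g + λ·(conj f + conj g))·z − λ`
lies on the unit circle. -/
theorem poncelet_cubic_roots_on_unit_circle
    (f g l : ℂ) (hf : ‖f‖ < 1) (hg : ‖g‖ < 1)
    (hl : ‖l‖ = 1) (z : ℂ)
    (hz : z ^ 3 - (f + g + l * conj f * conj g) * z ^ 2
        + (f * g + l * (conj f + conj g)) * z - l = 0) :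
    ‖z‖ = 1 := by
  have heq : z * (z - f) * (z - g) = l * ((conj f * z - 1) * (conj g * z - 1)) := by
    linear_combination hz
  have habs : ‖z‖ * ‖z - f‖ * ‖z - g‖
      = ‖conj f * z - 1‖ * ‖conj g * z - 1‖ := by
    have := congrArg norm heq
    simpa [norm_mul, hl] using this
  set a := ‖z‖ with ha
  set A := ‖z - f‖ with hA
  set B := ‖z - g‖ with hB
  set C := ‖conj f * z - 1‖ with hC
  set D := ‖conj g * z - 1‖ with hD
  have ha0 : 0 ≤ a := norm_nonneg z
  have hA0 : 0 ≤ A := norm_nonneg _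
  have hB0 : 0 ≤ B := norm_nonneg _
  have hC0 : 0 ≤ C := norm_nonneg _
  have hD0 : 0 ≤ D := norm_nonneg _
  have hf0 : 0 ≤ ‖f‖ := norm_nonneg f
  have hg0 : 0 ≤ ‖g‖ := norm_nonneg g
  have k1 : A^2 - C^2 = (a^2 - 1) * (1 - (‖f‖)^2) := blaschke_key f z
  have k2 : B^2 - D^2 = (a^2 - 1) * (1 - (‖g‖)^2) := blaschke_key g z
  -- lower bounds: A ≥ a - |f|, C ≥ 1 - |f|·a
  have lA : a - ‖f‖ ≤ A := by
    have := norm_sub_norm_le z f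
    linarith
  have lB : a - ‖g‖ ≤ B := by
    have := norm_sub_norm_le z g
    linarith
  have lC : 1 - ‖f‖ * a ≤ C := by
    have h1 := norm_sub_norm_le 1 (conj f * z)
    have h2 : ‖1 - conj f * z‖ = C := by
      rw [hC, ← norm_neg]; ring_nf
    simp only [norm_mul, norm_one, Complex.norm_conj] at h1
    rw [h2] at h1
    linarith
  have lD : 1 - ‖g‖ * a ≤ D := by
    have h1 := norm_sub_norm_le 1 (conj g * z)
    have h2 : ‖1 - conj g * z‖ = D := by
      rw [hD, ← norm_neg]; ring_nf
    simp only [norm_mul, norm_one, Complex.norm_conj] at h1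
    rw [h2] at h1
    linarith
  clear hz heq
  rcases lt_trichotomy a 1 with h | h | h
  · exfalso
    have h1f : 0 < (1 - a^2) * (1 - ‖f‖^2) :=
      mul_pos (by nlinarith) (by nlinarith)
    have h1g : 0 < (1 - a^2) * (1 - ‖g‖^2) :=
      mul_pos (by nlinarith) (by nlinarith)
    have hCA : A < C := lt_of_pow_lt_pow_left₀ 2 hC0 (by nlinarith)
    have hDB : B < D := lt_of_pow_lt_pow_left₀ 2 hD0 (by nlinarith)
    have hlt : A * B < C * D := mul_lt_mul'' hCA hDB hA0 hB0
    nlinarith [mul_nonneg hA0 hB0]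
  · exact h
  · exfalso
    have h1f : 0 < (a^2 - 1) * (1 - ‖f‖^2) :=
      mul_pos (by nlinarith) (by nlinarith)
    have h1g : 0 < (a^2 - 1) * (1 - ‖g‖^2) :=
      mul_pos (by nlinarith) (by nlinarith)
    have hApos : 0 < A := by nlinarith
    have hBpos : 0 < B := by nlinarith
    have hAC : C < A := lt_of_pow_lt_pow_left₀ 2 hA0 (by nlinarith)
    have hBD : D < B := lt_of_pow_lt_pow_left₀ 2 hB0 (by nlinarith)
    have hlt : C * D < A * B := mul_lt_mul'' hAC hBD hC0 hD0
    nlinarith [mul_pos hApos hBpos]
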